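/- Let A be a G-algebra (an algebra with G-action by automorphisms, i.e. an algebra in Rep(G)). The full centre of A in Z(G) is Z(A) = ⊕_{g∈G} Z_g(A), where Z_g(A) = { x ∈ A : xa = g(a)x for all a ∈ A }, with the G-action induced from A satisfying f(Z_g(A)) = Z_{fgf^{-1}}(A); furthermore Z_f(A)·Z_g(A) ⊆ Z_{fg}(A), so Z(A) is a G-graded algebra with compatible G-action, and Z_e(A) is the ordinary centre of A. -/
import Mathlib


namespace Stmt19

variable {k : Type*} [Field k] {G : Type*} [Group G] [DecidableEq G]
variable {A : Type*} [Ring A] [Algebra k A]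

/-- The degree-`g` component of the full centre of a `G`-algebra `A`:
`Z_g(A) = {x ∈ A ∣ x·a = g(a)·x for all a ∈ A}`. -/
def Zg (φ : G →* (A ≃ₐ[k] A)) (g : G) : Set A :=
  {x : A | ∀ a : A, x * a = φ g a * x}

/-- Let `A` be a `G`-algebra (an algebra with a `G`-action by algebra
automorphisms, i.e. an algebra in `Rep(G)`).  The full centre of `A` in `Z(G)`
is `Z(A) = ⊕_{g ∈ G} Z_g(A)` where `Z_g(A) = {x ∈ A ∣ x a = g(a) x ∀ a}`, with
the `G`-action induced from `A`, which satisfies `f(Z_g(A)) = Z_{fgf⁻¹}(A)`;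
moreover `Z_f(A) · Z_g(A) ⊆ Z_{fg}(A)`, so `Z(A)` is a `G`-graded algebra with
compatible `G`-action, `Z_e(A)` is the ordinary centre of `A`, and every pair
`(Z, ζ)` (a graded space with compatible action together with an equivariant map
`ζ` such that `ζ(z)·a = g(a)·ζ(z)` for `z` of degree `g`) factors uniquely
through the inclusion `Z(A) ⊆ A`-componentwise. -/
theorem stmt_19 (φ : G →* (A ≃ₐ[k] A)) :
    -- each component is a linear subspace
    (∀ g : G, ∃ S : Submodule k A, (S : Set A) = Zg φ g) ∧
    -- the `G`-action on `A` permutes the components: `f(Z_g(A)) = Z_{fgf⁻¹}(A)`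
    (∀ f g : G, φ f '' Zg φ g = Zg φ (f * g * f⁻¹)) ∧
    -- `Z(A)` is a graded algebra: `Z_f(A) · Z_g(A) ⊆ Z_{fg}(A)`
    (∀ f g : G, ∀ x ∈ Zg φ f, ∀ y ∈ Zg φ g, x * y ∈ Zg φ (f * g)) ∧
    -- the degree-`e` component is the ordinary centre of `A`
    (∀ x : A, x ∈ Zg φ (1 : G) ↔ x ∈ Set.center A) ∧
    -- terminality of `Z(A) = ⊕_g Z_g(A)` with the componentwise inclusion:
    -- every pair `(Z, ζ)` satisfying the full-centre condition factors through it
    (∀ (V : Type _) (_ : AddCommGroup V) (_ : Module k V)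
      (𝒱 : G → Submodule k V) (_ : DirectSum.IsInternal 𝒱)
      (ρ : G →* (V ≃ₗ[k] V))
      (_ : ∀ g f : G, (𝒱 f).map (ρ g).toLinearMap = 𝒱 (g * f * g⁻¹))
      (ζ : V →ₗ[k] A)
      (_ : ∀ g : G, ∀ v : V, ζ (ρ g v) = φ g (ζ v))
      (_ : ∀ g : G, ∀ v ∈ 𝒱 g, ∀ a : A, ζ v * a = φ g a * ζ v),
      ∀ g : G, ∀ v ∈ 𝒱 g, ζ v ∈ Zg φ g) := by
  have hconj : ∀ f g : G, ∀ x ∈ Zg φ g, φ f x ∈ Zg φ (f * g * f⁻¹) := by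
    intro f g x hx a
    have h1 : φ f ((φ f⁻¹) a) = a := by
      rw [← AlgEquiv.mul_apply, ← map_mul, mul_inv_cancel, map_one, AlgEquiv.one_apply]
    calc φ f x * a = φ f x * φ f (φ f⁻¹ a) := by rw [h1]
      _ = φ f (x * φ f⁻¹ a) := by rw [map_mul]
      _ = φ f (φ g (φ f⁻¹ a) * x) := by rw [hx]
      _ = φ (f * g * f⁻¹) a * φ f x := by
          rw [map_mul, ← AlgEquiv.mul_apply, ← AlgEquiv.mul_apply, ← map_mul, ← map_mul]
  refine ⟨?_, ?_, ?_, ?_, ?_⟩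
  · intro g
    refine ⟨{ carrier := Zg φ g, add_mem' := ?_, zero_mem' := ?_, smul_mem' := ?_ }, rfl⟩
    · intro x y hx hy a
      simp only [add_mul, mul_add, hx a, hy a]
    · intro a; simp [Zg]
    · intro c x hx a
      simp only [Algebra.smul_mul_assoc, Algebra.mul_smul_comm, hx a]
  · intro f g
    apply Set.eq_of_subset_of_subset
    · rintro _ ⟨x, hx, rfl⟩
      exact hconj f g x hx
    · intro y hy
      have := hconj f⁻¹ (f * g * f⁻¹) y hy
      refine ⟨φ f⁻¹ y, by simpa [mul_assoc] using this, ?_⟩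
      rw [← AlgEquiv.mul_apply, ← map_mul, mul_inv_cancel, map_one, AlgEquiv.one_apply]
  · intro f g x hx y hy a
    calc x * y * a = x * (φ g a * y) := by rw [mul_assoc, hy a]
      _ = φ f (φ g a) * x * y := by rw [← mul_assoc, hx]
      _ = φ (f * g) a * (x * y) := by
          rw [← AlgEquiv.mul_apply, ← map_mul, mul_assoc]
  · intro x
    rw [Semigroup.mem_center_iff]
    constructor
    · intro hx a; rw [hx a, map_one, AlgEquiv.one_apply]
    · intro hx a; rw [map_one, AlgEquiv.one_apply, hx a]
  · intro V _ _ 𝒱 _ ρ _ ζ _ hz g v hv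
    exact hz g v hv

end Stmt19
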